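/- If n is even, then for every nonempty subset S of X there exists a profile u such that the set of Borda winners at u is exactly S. -/

import Mathlib

open Finset

/-- The Borda score `B(x,u) = Σ_i s(x,i,u)`, where `s(x,i,u)` is the rank of `x`
in individual `i`'s ordering, counted from 1 at the top.  A profile assigns to
each individual `i` a rank equivalence `u i : Fin m ≃ Fin m` (lower = better). -/
def bordaScore {m n : ℕ} (u : Fin n → (Fin m ≃ Fin m)) (x : Fin m) : ℕ :=
  ∑ i : Fin n, (((u i) x).val + 1)

/-- The Borda correspondence `G_B(u)`: alternatives with minimal Borda score. -/
def bordaSet {m n : ℕ} (u : Fin n → (Fin m ≃ Fin m)) : Finset (Fin m) :=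
  univ.filter (fun x => ∀ y : Fin m, bordaScore u x ≤ bordaScore u y)

/-- If `n` is even then every nonempty subset of `X` is in the range of the
Borda correspondence. -/
theorem borda_range_even (m n : ℕ) (hm : 3 ≤ m) (hn : 2 ≤ n) (hne : Even n)
    (S : Finset (Fin m)) (hS : S.Nonempty) :
    ∃ u : Fin n → (Fin m ≃ Fin m), bordaSet u = S := by
  classical
  obtain ⟨p, hp⟩ := hne
  subst hp
  set k := S.card with hkdef
  have hk1 : 1 ≤ k := hS.card_pos
  have hkm : k ≤ m := by simpa using S.card_le_univ
  have hp1 : 1 ≤ p := by omega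
  have hcard1 : Fintype.card {x : Fin m // x ∈ S} = k := by simp [hkdef]
  have hcard2 : Fintype.card {x : Fin m // x ∉ S} = m - k := by
    rw [Fintype.card_subtype_compl, hcard1]; simp
  let e1 : {x : Fin m // x ∈ S} ≃ Fin k := Fintype.equivFinOfCardEq hcard1
  let e2 : {x : Fin m // x ∉ S} ≃ Fin (m - k) := Fintype.equivFinOfCardEq hcard2
  let σ : Fin m ≃ Fin m :=
    (Equiv.sumCompl (· ∈ S)).symm.trans ((e1.sumCongr e2).trans
      (finSumFinEquiv.trans (finCongr (by omega))))
  have hσ : ∀ x : Fin m, (σ x).val < k ↔ x ∈ S := by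
    intro x
    by_cases hx : x ∈ S
    · simp only [σ, Equiv.trans_apply, Equiv.sumCompl_symm_apply_of_pos hx,
        Equiv.sumCongr_apply, Sum.map_inl, finSumFinEquiv_apply_left,
        finCongr_apply, Fin.coe_cast, Fin.coe_castAdd]
      simp [hx]
    · simp only [σ, Equiv.trans_apply, Equiv.sumCompl_symm_apply_of_neg hx,
        Equiv.sumCongr_apply, Sum.map_inr, finSumFinEquiv_apply_right,
        finCongr_apply, Fin.coe_cast, Fin.coe_natAdd]
      simp [hx]
  let f : Fin m → Fin m := fun i =>
    if h : i.val < k then ⟨k - 1 - i.val, by omega⟩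
    else ⟨m + k - 1 - i.val, by have := i.isLt; omega⟩
  have hf : Function.Involutive f := by
    intro i
    have hi := i.isLt
    by_cases h : i.val < k
    · simp only [f, dif_pos h]
      have h2 : k - 1 - i.val < k := by omega
      simp only [dif_pos h2]
      apply Fin.ext; simp; omega
    · simp only [f, dif_neg h]
      have h2 : ¬ (m + k - 1 - i.val < k) := by omega
      simp only [dif_neg h2]
      apply Fin.ext; simp; omega
  let τ : Fin m ≃ Fin m := σ.trans hf.toPerm
  have hval : ∀ x : Fin m, (σ x).val + (τ x).val =
      if x ∈ S then k - 1 else m + k - 1 := by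
    intro x
    have hlt := (σ x).isLt
    by_cases hx : x ∈ S
    · have h1 : (σ x).val < k := (hσ x).2 hx
      simp [τ, Function.Involutive.toPerm, f, dif_pos h1, hx]
      omega
    · have h1 : ¬ (σ x).val < k := fun h => hx ((hσ x).1 h)
      simp [τ, Function.Involutive.toPerm, f, dif_neg h1, hx]
      omega
  refine ⟨Fin.addCases (fun _ => σ) (fun _ => τ), ?_⟩
  have hscore : ∀ x : Fin m,
      bordaScore (Fin.addCases (fun _ => σ) (fun _ => τ) : Fin (p + p) → _) x =
        p * ((σ x).val + (τ x).val + 2) := by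
    intro x
    unfold bordaScore
    rw [Fin.sum_univ_add]
    simp only [Fin.addCases_left, Fin.addCases_right, Finset.sum_const,
      card_univ, Fintype.card_fin, smul_eq_mul]
    ring
  have hSval : ∀ x ∈ S, bordaScore (Fin.addCases (fun _ => σ) (fun _ => τ) :
      Fin (p + p) → _) x = p * (k + 1) := by
    intro x hx
    rw [hscore, hval, if_pos hx]
    congr 1; omega
  have hnSval : ∀ x ∉ S, bordaScore (Fin.addCases (fun _ => σ) (fun _ => τ) :
      Fin (p + p) → _) x = p * (m + k + 1) := by
    intro x hx
    rw [hscore, hval, if_neg hx]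
    congr 1; omega
  ext x
  simp only [bordaSet, mem_filter, mem_univ, true_and]
  constructor
  · intro h
    by_contra hx
    obtain ⟨y, hy⟩ := hS
    have := h y
    rw [hnSval x hx, hSval y hy] at this
    have : p * (m + k + 1) ≤ p * (k + 1) := this
    nlinarith
  · intro hx y
    rw [hSval x hx]
    by_cases hy : y ∈ S
    · rw [hSval y hy]
    · rw [hnSval y hy]
      nlinarith
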